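/- arXiv:1609.05277 — 5 statements merged into one kernel-verified Lean document; each statement's English description precedes it below -/
import Mathlib

section
/- Let n be a positive integer and let r be an integer with 0 ≤ r ≤ (n-1)/2. Define the n×n matrix Q_{r,n} = (q_{i,j}) by q_{i,j} = 2/(2r+1) if i+j ≤ r+1 or i+j ≥ 2n-r+1, and q_{i,j} = a_{i,j}/(2r+1) otherwise. Then Q_{r,n} is a doubly stochastic matrix, and q_{i,j} ≠ 0 if and only if a_{i,j} = 1 (i.e., Q_{r,n} has the same support as A_{r,n}). -/
open Finset

lemma key_count (n r i : ℕ) (hi : i < n) (hr : 2*r+1 ≤ n) :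
    ((range n).filter (fun j => (i + 1) + (j + 1) ≤ r + 1 ∨ 2*n - r + 1 ≤ (i + 1) + (j + 1))).card
    + ((range n).filter (fun j : ℕ => |(i:ℤ) - (j:ℤ)| ≤ (r:ℤ))).card = 2*r+1 := by
  have h1 : (range n).filter (fun j => (i + 1) + (j + 1) ≤ r + 1 ∨ 2*n - r + 1 ≤ (i + 1) + (j + 1))
      = Ico 0 (r - i) ∪ Ico (2*n - r - 1 - i) n := by
    ext j; simp only [mem_filter, mem_range, mem_union, mem_Ico]; omega
  have h2 : (range n).filter (fun j : ℕ => |(i:ℤ) - (j:ℤ)| ≤ (r:ℤ))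
      = Ico (i - r) (min (i+r+1) n) := by
    ext j; simp only [mem_filter, mem_range, mem_Ico, abs_le, neg_le_sub_iff_le_add,
      sub_le_iff_le_add]
    omega
  rw [h1, h2, card_union_of_disjoint, Nat.card_Ico, Nat.card_Ico, Nat.card_Ico]
  · omega
  · rw [Finset.disjoint_left]; intro a; simp only [mem_Ico]; omega

lemma key_sum (n r i : ℕ) (hi : i < n) (hr : 2*r+1 ≤ n) :
    ∑ j ∈ range n, (if (i + 1) + (j + 1) ≤ r + 1 ∨ 2*n - r + 1 ≤ (i + 1) + (j + 1) then (2:ℝ)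
      else (if |(i:ℤ) - (j:ℤ)| ≤ (r:ℤ) then (1:ℝ) else 0)) = 2*(r:ℝ)+1 := by
  have hpt : ∀ j ∈ range n,
      (if (i + 1) + (j + 1) ≤ r + 1 ∨ 2*n - r + 1 ≤ (i + 1) + (j + 1) then (2:ℝ)
        else (if |(i:ℤ) - (j:ℤ)| ≤ (r:ℤ) then (1:ℝ) else 0)) =
      (if (i + 1) + (j + 1) ≤ r + 1 ∨ 2*n - r + 1 ≤ (i + 1) + (j + 1) then (1:ℝ) else 0)
      + (if |(i:ℤ) - (j:ℤ)| ≤ (r:ℤ) then (1:ℝ) else 0) := by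
    intro j hj
    rw [mem_range] at hj
    by_cases hC : (i + 1) + (j + 1) ≤ r + 1 ∨ 2*n - r + 1 ≤ (i + 1) + (j + 1)
    · have hD : |(i:ℤ) - (j:ℤ)| ≤ (r:ℤ) := by
        rw [abs_le]; constructor <;> omega
      rw [if_pos hC, if_pos hC, if_pos hD]; norm_num
    · rw [if_neg hC, if_neg hC, zero_add]
  rw [Finset.sum_congr rfl hpt, Finset.sum_add_distrib, Finset.sum_boole, Finset.sum_boole]
  have h := key_count n r i hi hr
  have : (((range n).filter (fun j => (i + 1) + (j + 1) ≤ r + 1 ∨ 2*n - r + 1 ≤ (i + 1) + (j + 1))).card : ℝ)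
      + (((range n).filter (fun j : ℕ => |(i:ℤ) - (j:ℤ)| ≤ (r:ℤ))).card : ℝ) = 2*(r:ℝ)+1 := by
    exact_mod_cast congrArg (Nat.cast : ℕ → ℝ) h
  convert this using 2

/-- The matrix `Q_{r,n}` (first class, case `0 ≤ r ≤ (n-1)/2`), defined with
1-based indices `i+1, j+1` by `q_{i,j} = 2/(2r+1)` if `i+j ≤ r+1` or
`i+j ≥ 2n-r+1`, and `q_{i,j} = a_{i,j}/(2r+1)` otherwise, is a doubly
stochastic matrix with the same support as `A_{r,n}`. -/
theorem first_class_Q_small_radius_doubly_stochastic (n r : ℕ)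
    (hn : 0 < n) (hr : 2 * r + 1 ≤ n)
    (Q : Matrix (Fin n) (Fin n) ℝ)
    (hQ : ∀ i j : Fin n,
      Q i j =
        if ((i : ℕ) + 1) + ((j : ℕ) + 1) ≤ r + 1
            ∨ 2 * n - r + 1 ≤ ((i : ℕ) + 1) + ((j : ℕ) + 1) then
          2 / (2 * (r : ℝ) + 1)
        else
          (if |((i : ℕ) : ℤ) - ((j : ℕ) : ℤ)| ≤ (r : ℤ) then (1 : ℝ) else 0)
            / (2 * (r : ℝ) + 1)) :
    (∀ i j, 0 ≤ Q i j) ∧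
    (∀ i, ∑ j, Q i j = 1) ∧
    (∀ j, ∑ i, Q i j = 1) ∧
    (∀ i j : Fin n, Q i j ≠ 0 ↔ |((i : ℕ) : ℤ) - ((j : ℕ) : ℤ)| ≤ (r : ℤ)) := by
  have hden : (0:ℝ) < 2*(r:ℝ)+1 := by positivity
  have hsymm : ∀ i j : Fin n, Q i j = Q j i := by
    intro i j
    rw [hQ, hQ]
    have h1 : ((i:ℕ) + 1) + ((j:ℕ) + 1) = ((j:ℕ) + 1) + ((i:ℕ) + 1) := by ring
    rw [h1, abs_sub_comm]
  have hrow : ∀ i : Fin n, ∑ j, Q i j = 1 := by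
    intro i
    have : ∑ j : Fin n, Q i j =
        ∑ j : Fin n, (if ((i:ℕ) + 1) + ((j:ℕ) + 1) ≤ r + 1
            ∨ 2 * n - r + 1 ≤ ((i:ℕ) + 1) + ((j:ℕ) + 1) then (2:ℝ)
          else (if |((i:ℕ):ℤ) - ((j:ℕ):ℤ)| ≤ (r:ℤ) then (1:ℝ) else 0)) / (2*(r:ℝ)+1) := by
      apply Finset.sum_congr rfl
      intro j _
      rw [hQ]
      split_ifs <;> rfl
    rw [this, ← Finset.sum_div,
      Fin.sum_univ_eq_sum_range (fun j => (if ((i:ℕ) + 1) + (j + 1) ≤ r + 1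
            ∨ 2 * n - r + 1 ≤ ((i:ℕ) + 1) + (j + 1) then (2:ℝ)
          else (if |((i:ℕ):ℤ) - (j:ℤ)| ≤ (r:ℤ) then (1:ℝ) else 0))) n,
      key_sum n r i i.isLt hr, div_self (ne_of_gt hden)]
  refine ⟨?_, hrow, ?_, ?_⟩
  · intro i j
    rw [hQ]
    split_ifs <;> positivity
  · intro j
    calc ∑ i, Q i j = ∑ i, Q j i := by
          apply Finset.sum_congr rfl; intro i _; exact hsymm i j
      _ = 1 := hrow j
  · intro i j
    have hi := i.isLt
    have hj := j.isLt
    rw [hQ]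
    by_cases hC : ((i:ℕ) + 1) + ((j:ℕ) + 1) ≤ r + 1
        ∨ 2 * n - r + 1 ≤ ((i:ℕ) + 1) + ((j:ℕ) + 1)
    · rw [if_pos hC]
      have hD : |((i:ℕ):ℤ) - ((j:ℕ):ℤ)| ≤ (r:ℤ) := by
        rw [abs_le]; constructor <;> omega
      simp only [hD, iff_true]
      exact div_ne_zero two_ne_zero (ne_of_gt hden)
    · rw [if_neg hC]
      by_cases hD : |((i:ℕ):ℤ) - ((j:ℕ):ℤ)| ≤ (r:ℤ)
      · rw [if_pos hD]
        simp only [hD, iff_true]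
        exact div_ne_zero one_ne_zero (ne_of_gt hden)
      · rw [if_neg hD]
        simp [hD]
end

section
/- Let n be a positive integer and let r be an integer with (n-1)/2 ≤ r ≤ n-1. Define the n×n matrix Q_{r,n} = (q_{i,j}) by q_{i,j} = 2/n if i+j ≤ n-r or i+j ≥ n+r+2, and q_{i,j} = a_{i,j}/n otherwise. Then Q_{r,n} is a doubly stochastic matrix, and q_{i,j} ≠ 0 if and only if a_{i,j} = 1 (i.e., Q_{r,n} has the same support as A_{r,n}). -/
/-- The "corner" condition for the matrix `Q_{r,n}`. -/
def cornerCond (n r : ℕ) (i j : Fin n) : Prop :=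
  ((i : ℕ) + 1) + ((j : ℕ) + 1) ≤ n - r ∨ n + r + 2 ≤ ((i : ℕ) + 1) + ((j : ℕ) + 1)

instance (n r : ℕ) (i j : Fin n) : Decidable (cornerCond n r i j) :=
  inferInstanceAs (Decidable (_ ∨ _))

lemma cornerCond_support (n r : ℕ) (hr1 : n ≤ 2 * r + 1) (i j : Fin n)
    (h : cornerCond n r i j) :
    |((i : ℕ) : ℤ) - ((j : ℕ) : ℤ)| ≤ (r : ℤ) := by
  have hi := i.isLt; have hj := j.isLt
  rw [abs_le]
  rcases h with h | h <;> constructor <;> omega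

lemma cornerCond_rev (n r : ℕ) (hr2 : r ≤ n - 1) (i j : Fin n) :
    cornerCond n r i j.rev ↔ ¬ (|((i : ℕ) : ℤ) - ((j : ℕ) : ℤ)| ≤ (r : ℤ)) := by
  have hi := i.isLt; have hj := j.isLt
  unfold cornerCond
  rw [Fin.val_rev, abs_le]
  omega

/-- The matrix `Q_{r,n}` (first class, case `(n-1)/2 ≤ r ≤ n-1`), defined with
1-based indices `i+1, j+1` by `q_{i,j} = 2/n` if `i+j ≤ n-r` or `i+j ≥ n+r+2`,
and `q_{i,j} = a_{i,j}/n` otherwise, is a doubly stochastic matrix with the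
same support as `A_{r,n}`. -/
theorem first_class_Q_large_radius_doubly_stochastic (n r : ℕ)
    (hn : 0 < n) (hr1 : n ≤ 2 * r + 1) (hr2 : r ≤ n - 1)
    (Q : Matrix (Fin n) (Fin n) ℝ)
    (hQ : ∀ i j : Fin n,
      Q i j =
        if ((i : ℕ) + 1) + ((j : ℕ) + 1) ≤ n - r
            ∨ n + r + 2 ≤ ((i : ℕ) + 1) + ((j : ℕ) + 1) then
          2 / (n : ℝ)
        else
          (if |((i : ℕ) : ℤ) - ((j : ℕ) : ℤ)| ≤ (r : ℤ) then (1 : ℝ) else 0)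
            / (n : ℝ)) :
    (∀ i j, 0 ≤ Q i j) ∧
    (∀ i, ∑ j, Q i j = 1) ∧
    (∀ j, ∑ i, Q i j = 1) ∧
    (∀ i j : Fin n, Q i j ≠ 0 ↔ |((i : ℕ) : ℤ) - ((j : ℕ) : ℤ)| ≤ (r : ℤ)) := by
  have hn0 : (n : ℝ) ≠ 0 := Nat.cast_ne_zero.mpr hn.ne'
  -- pointwise decomposition
  have key : ∀ i j : Fin n, Q i j =
      (if |((i : ℕ) : ℤ) - ((j : ℕ) : ℤ)| ≤ (r : ℤ) then (1 : ℝ) else 0) / n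
      + (if cornerCond n r i j then (1 : ℝ) else 0) / n := by
    intro i j
    rw [hQ]
    by_cases h : ((i : ℕ) + 1) + ((j : ℕ) + 1) ≤ n - r
        ∨ n + r + 2 ≤ ((i : ℕ) + 1) + ((j : ℕ) + 1)
    · rw [if_pos h, if_pos (cornerCond_support n r hr1 i j h),
        if_pos (show cornerCond n r i j from h)]
      ring
    · rw [if_neg h, if_neg (show ¬ cornerCond n r i j from h)]
      ring
  -- row sums
  have rowsum : ∀ i, ∑ j, Q i j = 1 := by
    intro i
    have h1 : ∑ j, Q i j =
        (∑ j : Fin n, (if |((i : ℕ) : ℤ) - ((j : ℕ) : ℤ)| ≤ (r : ℤ) then (1 : ℝ) else 0) / n)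
        + ∑ j : Fin n, (if cornerCond n r i j then (1 : ℝ) else 0) / n := by
      rw [← Finset.sum_add_distrib]
      exact Finset.sum_congr rfl fun j _ => key i j
    have h2 : (∑ j : Fin n, (if cornerCond n r i j then (1 : ℝ) else 0) / n)
        = ∑ j : Fin n, (if cornerCond n r i j.rev then (1 : ℝ) else 0) / n :=
      (Fintype.sum_bijective Fin.rev Fin.rev_bijective _ _ (fun j => rfl)).symm
    rw [h1, h2, ← Finset.sum_add_distrib]
    have h3 : ∀ j : Fin n,
        (if |((i : ℕ) : ℤ) - ((j : ℕ) : ℤ)| ≤ (r : ℤ) then (1 : ℝ) else 0) / n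
        + (if cornerCond n r i j.rev then (1 : ℝ) else 0) / n = 1 / n := by
      intro j
      by_cases h : |((i : ℕ) : ℤ) - ((j : ℕ) : ℤ)| ≤ (r : ℤ)
      · rw [if_pos h, if_neg (fun hc => ((cornerCond_rev n r hr2 i j).mp hc) h)]
        ring
      · rw [if_neg h, if_pos ((cornerCond_rev n r hr2 i j).mpr h)]
        ring
    rw [Finset.sum_congr rfl fun j _ => h3 j, Finset.sum_const, Finset.card_univ,
      Fintype.card_fin, nsmul_eq_mul]
    field_simp
  -- symmetry
  have hsymm : ∀ i j : Fin n, Q i j = Q j i := by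
    intro i j
    rw [hQ, hQ]
    have e1 : ((i : ℕ) + 1) + ((j : ℕ) + 1) = ((j : ℕ) + 1) + ((i : ℕ) + 1) := by ring
    rw [e1, abs_sub_comm]
  refine ⟨?_, rowsum, ?_, ?_⟩
  · intro i j
    rw [key]
    have : (0:ℝ) ≤ (n : ℝ) := Nat.cast_nonneg n
    apply add_nonneg <;> apply div_nonneg <;> first | assumption | split_ifs <;> norm_num
  · intro j
    calc ∑ i, Q i j = ∑ i, Q j i := Finset.sum_congr rfl fun i _ => hsymm i j
    _ = 1 := rowsum j
  · intro i j
    rw [key]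
    constructor
    · intro hne
      by_contra h
      have hc : ¬ cornerCond n r i j := fun hc => h (cornerCond_support n r hr1 i j hc)
      rw [if_neg h, if_neg hc] at hne
      simp at hne
    · intro h
      rw [if_pos h]
      have h1 : (0:ℝ) < 1 / n := by positivity
      have h2 : (0:ℝ) ≤ (if cornerCond n r i j then (1 : ℝ) else 0) / n := by
        apply div_nonneg _ (Nat.cast_nonneg n)
        split_ifs <;> norm_num
      positivity
end

section
/- For every integer r ≥ 1, the unique real number α > 0 satisfying α^{r+1} - α - 1 = 0 obeys the bounds 1 + ln(2)/(r+1) ≤ α ≤ 1 + ln(2)/r. In particular, α = 1 + ln(2)/r + o(1/r) as r → ∞. -/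
open Real

lemma log_lb (u : ℝ) (hu : 0 ≤ u) : u - u^2/2 ≤ Real.log (1+u) := by
  set f : ℝ → ℝ := fun t => Real.log (1+t) - t + t^2/2 with hf
  have hd : ∀ x : ℝ, 0 ≤ x → HasDerivAt f (1/(1+x) - 1 + x) x := by
    intro x hx
    have h1 : (0:ℝ) < 1 + x := by linarith
    have hlog : HasDerivAt (fun t : ℝ => Real.log (1+t)) (1/(1+x)) x := by
      have := (Real.hasDerivAt_log h1.ne').comp x ((hasDerivAt_id x).const_add 1)
      simpa [one_div, Function.comp_def] using this
    have hsq : HasDerivAt (fun t : ℝ => t^2/2) x x := by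
      simpa using (hasDerivAt_pow 2 x).div_const 2
    exact (hlog.sub (hasDerivAt_id x)).add hsq
  have key : ∀ x ∈ Set.Ici (0:ℝ), ∀ y ∈ Set.Ici (0:ℝ), x ≤ y → f x ≤ f y := by
    apply monotoneOn_of_deriv_nonneg (convex_Ici 0)
    · exact fun x hx => (hd x hx).continuousAt.continuousWithinAt
    · intro x hx
      rw [interior_Ici] at hx
      exact ((hd x hx.le).differentiableAt).differentiableWithinAt
    · intro x hx
      rw [interior_Ici] at hx
      rw [(hd x hx.le).deriv]
      have h1 : (0:ℝ) < 1 + x := by linarith [le_of_lt (show (0:ℝ) < x from hx)]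
      have hx2 : 0 ≤ x^2/(1+x) := by positivity
      have : 1/(1+x) - 1 + x = x^2/(1+x) := by field_simp; ring
      linarith
  have h0 : f 0 = 0 := by simp [hf]
  have := key 0 (by simp) u hu hu
  rw [h0] at this
  simp only [hf] at this
  linarith

lemma mono_key (r : ℕ) (hr : 1 ≤ r) {x y : ℝ} (hx : 1 < x) (hxy : x < y) :
    x^(r+1) - x - 1 < y^(r+1) - y - 1 := by
  have hxr : 1 < x^r := one_lt_pow₀ hx (by omega)
  have hle : x^r ≤ y^r := pow_le_pow_left₀ (by linarith) hxy.le r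
  have e1 : x^(r+1) = x^r * x := pow_succ x r
  have e2 : y^(r+1) = y^r * y := pow_succ y r
  rw [e1, e2]
  nlinarith [mul_le_mul_of_nonneg_right hle (by linarith : (0:ℝ) ≤ y),
    mul_pos (by linarith : (0:ℝ) < x^r - 1) (by linarith : (0:ℝ) < y - x)]

lemma aux1 : ∀ r : ℕ, 1 ≤ r → ∀ α : ℝ, 0 < α → α ^ (r + 1) - α - 1 = 0 →
    1 + Real.log 2 / ((r : ℝ) + 1) ≤ α ∧ α ≤ 1 + Real.log 2 / (r : ℝ) := by
  intro r hr α hα hroot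
  have hl2 : (0:ℝ) < Real.log 2 := Real.log_pos (by norm_num)
  have hrpos : (0:ℝ) < (r:ℝ) := by exact_mod_cast hr
  have hr1 : (0:ℝ) < (r:ℝ) + 1 := by linarith
  have hα1 : 1 < α := by
    by_contra h
    push_neg at h
    have := pow_le_one₀ hα.le h (n := r+1)
    linarith
  constructor
  · -- lower bound
    set c : ℝ := Real.log 2 / ((r:ℝ)+1) with hc
    have hcpos : 0 < c := by positivity
    have hγ1 : (1:ℝ) < 1 + c := by linarith
    have hpow : (1+c)^(r+1) ≤ 2 := by
      have h1 : 1 + c ≤ Real.exp c := by linarith [Real.add_one_le_exp c]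
      have h2 : (1+c)^(r+1) ≤ (Real.exp c)^(r+1) :=
        pow_le_pow_left₀ (by linarith) h1 (r+1)
      have h3 : (Real.exp c)^(r+1) = Real.exp (((r:ℝ)+1) * c) := by
        rw [← Real.exp_nat_mul]
        push_cast
        ring_nf
      have h4 : ((r:ℝ)+1) * c = Real.log 2 := by
        rw [hc]; field_simp
      calc (1+c)^(r+1) ≤ Real.exp (((r:ℝ)+1) * c) := h2.trans_eq h3
        _ = 2 := by rw [h4, Real.exp_log]; norm_num
    by_contra h
    push_neg at h
    have hk := mono_key r hr hα1 (by linarith : α < 1 + c)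
    rw [hroot] at hk
    nlinarith
  · -- upper bound
    set u : ℝ := Real.log 2 / (r:ℝ) with hu
    have hupos : 0 < u := by positivity
    have hβ1 : (1:ℝ) < 1 + u := by linarith
    have hru : (r:ℝ) * u = Real.log 2 := by rw [hu]; field_simp
    have hβpow : 2 + u ≤ (1+u)^(r+1) := by
      rcases lt_or_ge r 3 with h3 | h3
      · interval_cases r
        · have : u = Real.log 2 := by rw [hu]; norm_num
          rw [this]
          have hL : (0.6931471803:ℝ) < Real.log 2 := Real.log_two_gt_d9
          have hL' : Real.log 2 < 0.6931471808 := Real.log_two_lt_d9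
          norm_num
          nlinarith [hL, hL', sq_nonneg (Real.log 2 - 0.6931471803)]
        · have : u = Real.log 2 / 2 := by rw [hu]; norm_num
          rw [this]
          have hL : (0.6931471803:ℝ) < Real.log 2 := Real.log_two_gt_d9
          have hL' : Real.log 2 < 0.6931471808 := Real.log_two_lt_d9
          norm_num
          nlinarith [hL, hL', sq_nonneg (Real.log 2 - 0.6931471803),
            mul_pos (mul_pos hl2 hl2) hl2]
      · -- r ≥ 3
        have hr3 : (3:ℝ) ≤ (r:ℝ) := by exact_mod_cast h3
        have hu3 : 3 * u ≤ Real.log 2 := by nlinarith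
        have hlog1 : Real.log (2+u) ≤ Real.log 2 + u/2 := by
          have : (2:ℝ)+u = 2*(1+u/2) := by ring
          rw [this, Real.log_mul (by norm_num) (by positivity)]
          have := Real.log_le_sub_one_of_pos (show (0:ℝ) < 1+u/2 by positivity)
          linarith
        have hlog2 : u - u^2/2 ≤ Real.log (1+u) := log_lb u hupos.le
        have hmain : Real.log 2 + u/2 ≤ ((r:ℝ)+1) * (u - u^2/2) := by
          nlinarith [Real.log_two_lt_d9, hupos, hru, hu3, hr3]
        have hlog : Real.log (2+u) ≤ ((r:ℝ)+1) * Real.log (1+u) := by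
          have : ((r:ℝ)+1) * (u - u^2/2) ≤ ((r:ℝ)+1) * Real.log (1+u) :=
            mul_le_mul_of_nonneg_left hlog2 (by linarith)
          linarith
        calc 2 + u = Real.exp (Real.log (2+u)) := (Real.exp_log (by positivity)).symm
          _ ≤ Real.exp (((r:ℝ)+1) * Real.log (1+u)) := Real.exp_le_exp.mpr hlog
          _ = (Real.exp (Real.log (1+u)))^(r+1) := by
              rw [← Real.exp_nat_mul]; push_cast; ring_nf
          _ = (1+u)^(r+1) := by rw [Real.exp_log (by positivity)]
    by_contra h
    push_neg at h
    have hk := mono_key r hr hβ1 (by linarith : 1 + u < α)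
    rw [hroot] at hk
    nlinarith

/-- For every integer `r ≥ 1`, any positive root `α` of `α^(r+1) - α - 1 = 0`
satisfies `1 + ln(2)/(r+1) ≤ α ≤ 1 + ln(2)/r`. In particular, for any choice
`α : ℕ → ℝ` of such roots, `α r = 1 + ln(2)/r + o(1/r)` as `r → ∞`, i.e.,
`r · (α r - 1 - ln(2)/r) → 0`. -/
theorem root_asymptotics :
    (∀ r : ℕ, 1 ≤ r → ∀ α : ℝ, 0 < α → α ^ (r + 1) - α - 1 = 0 →
      1 + Real.log 2 / ((r : ℝ) + 1) ≤ α ∧ α ≤ 1 + Real.log 2 / (r : ℝ)) ∧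
    (∀ α : ℕ → ℝ,
      (∀ r : ℕ, 1 ≤ r → 0 < α r ∧ (α r) ^ (r + 1) - α r - 1 = 0) →
      Filter.Tendsto (fun r : ℕ => (r : ℝ) * (α r - (1 + Real.log 2 / (r : ℝ))))
        Filter.atTop (nhds 0)) := by
  refine ⟨aux1, ?_⟩
  intro α hα
  have hl2 : (0:ℝ) < Real.log 2 := Real.log_pos (by norm_num)
  have hg : Filter.Tendsto (fun r : ℕ => -Real.log 2 / ((r:ℝ)+1)) Filter.atTop (nhds 0) := by
    have h := tendsto_one_div_add_atTop_nhds_zero_nat.const_mul (-Real.log 2)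
    simpa [div_eq_mul_inv, neg_mul, mul_comm] using h
  apply tendsto_of_tendsto_of_tendsto_of_le_of_le' hg tendsto_const_nhds
  · filter_upwards [Filter.eventually_ge_atTop 1] with r hr
    have hrpos : (0:ℝ) < (r:ℝ) := by exact_mod_cast hr
    have hr1 : (0:ℝ) < (r:ℝ) + 1 := by linarith
    obtain ⟨hpos, hroot⟩ := hα r hr
    obtain ⟨hlow, _⟩ := aux1 r hr (α r) hpos hroot
    have e2 : Real.log 2 ≤ ((r:ℝ)+1) * (α r - 1) := by
      have : Real.log 2 / ((r:ℝ)+1) ≤ α r - 1 := by linarith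
      calc Real.log 2 = ((r:ℝ)+1) * (Real.log 2 / ((r:ℝ)+1)) := by field_simp
        _ ≤ ((r:ℝ)+1) * (α r - 1) := mul_le_mul_of_nonneg_left this (by linarith)
    have e1 : (r:ℝ) * (α r - (1 + Real.log 2 / (r:ℝ))) = (r:ℝ)*(α r - 1) - Real.log 2 := by
      field_simp
      ring
    rw [e1, div_le_iff₀ hr1]
    nlinarith [mul_nonneg hrpos.le (by linarith : (0:ℝ) ≤ ((r:ℝ)+1)*(α r - 1) - Real.log 2)]
  · filter_upwards [Filter.eventually_ge_atTop 1] with r hr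
    have hrpos : (0:ℝ) < (r:ℝ) := by exact_mod_cast hr
    obtain ⟨hpos, hroot⟩ := hα r hr
    obtain ⟨_, hupp⟩ := aux1 r hr (α r) hpos hroot
    nlinarith
end

section
/- Let n and r be integers with 1 ≤ r ≤ (n-2)/2. Let α > 0 satisfy α^{r+1} - α - 1 = 0 and set C = (α-1)/(α+1). Define the n×n matrix Q_{r,n} = (q_{i,j}) by q_{i,j} = a_{i,j} · C · q̃_{i,j}, where q̃_{i,j} = α^{(r+1-i)+(r+1-j)} if 1 ≤ i ≤ r+1 and 1 ≤ j ≤ r+1; q̃_{i,j} = α^{(i-(n-r))+(j-(n-r))} if n-r ≤ i ≤ n and n-r ≤ j ≤ n; and q̃_{i,j} = α^{|i-j|} otherwise. Then Q_{r,n} is a doubly stochastic matrix with the same support as A_{r,n}. -/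
noncomputable def qt (α : ℝ) (n r a j : ℕ) : ℝ :=
  if (a + 1 ≤ r + 1) ∧ (j + 1 ≤ r + 1) then
    α ^ ((r + 1 - (a + 1)) + (r + 1 - (j + 1)))
  else if (n - r ≤ a + 1) ∧ (n - r ≤ j + 1) then
    α ^ (((a + 1) - (n - r)) + ((j + 1) - (n - r)))
  else
    α ^ (((a : ℤ) - (j : ℤ)).natAbs)

noncomputable def qfull (α C : ℝ) (n r a j : ℕ) : ℝ :=
  (if |(a : ℤ) - (j : ℤ)| ≤ (r : ℤ) then (1 : ℝ) else 0) * C * qt α n r a j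

lemma key1 (α : ℝ) (hα1 : 1 < α) (r a : ℕ) (ha : a ≤ r) (h : α ^ (r + 1) = α + 1) :
    (α - 1) / (α + 1) * α ^ (r - a) * ∑ k ∈ Finset.range (r + 1), α ^ k
      + (α - 1) / (α + 1) * α ^ (r + 1 - a) * ∑ k ∈ Finset.range a, α ^ k = 1 := by
  have hne : α ≠ 1 := hα1.ne'
  have h1 : α - 1 ≠ 0 := sub_ne_zero.mpr hne
  have h2 : α + 1 ≠ 0 := ne_of_gt (by linarith)
  obtain ⟨s, rfl⟩ : ∃ s, r = a + s := ⟨r - a, by omega⟩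
  rw [geom_sum_eq hne, geom_sum_eq hne,
    show a + s - a = s from by omega, show a + s + 1 - a = s + 1 from by omega]
  have key : α ^ s * (α ^ (a + s + 1) - 1) + α ^ (s + 1) * (α ^ a - 1) = α + 1 := by
    linear_combination (α ^ s + 1) * h
  calc (α - 1) / (α + 1) * α ^ s * ((α ^ (a + s + 1) - 1) / (α - 1))
        + (α - 1) / (α + 1) * α ^ (s + 1) * ((α ^ a - 1) / (α - 1))
      = (α - 1) / (α + 1) *
          ((α ^ s * (α ^ (a + s + 1) - 1) + α ^ (s + 1) * (α ^ a - 1)) / (α - 1)) := by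
        ring
    _ = (α - 1) / (α + 1) * ((α + 1) / (α - 1)) := by rw [key]
    _ = 1 := by field_simp

lemma key2 (α : ℝ) (hα1 : 1 < α) (r : ℕ) (h : α ^ (r + 1) = α + 1) :
    (α - 1) / (α + 1) * ∑ k ∈ Finset.range (r + 1), α ^ k
      + (α - 1) / (α + 1) * α ^ 1 * ∑ k ∈ Finset.range r, α ^ k = 1 := by
  have hne : α ≠ 1 := hα1.ne'
  have h1 : α - 1 ≠ 0 := sub_ne_zero.mpr hne
  have h2 : α + 1 ≠ 0 := ne_of_gt (by linarith)
  rw [geom_sum_eq hne, geom_sum_eq hne]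
  have key : (α ^ (r + 1) - 1) + α * (α ^ r - 1) = α + 1 := by
    linear_combination 2 * h
  calc (α - 1) / (α + 1) * ((α ^ (r + 1) - 1) / (α - 1))
        + (α - 1) / (α + 1) * α ^ 1 * ((α ^ r - 1) / (α - 1))
      = (α - 1) / (α + 1) * (((α ^ (r + 1) - 1) + α * (α ^ r - 1)) / (α - 1)) := by
        ring
    _ = (α - 1) / (α + 1) * ((α + 1) / (α - 1)) := by rw [key]
    _ = 1 := by field_simp

/-- The matrix `Q_{r,n}` (second class, case `1 ≤ r ≤ (n-2)/2`), defined with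
1-based indices `i+1, j+1` by `q_{i,j} = a_{i,j} · C · q̃_{i,j}` with
`C = (α-1)/(α+1)` and `α > 0` the root of `α^(r+1) - α - 1 = 0`, is a doubly
stochastic matrix with the same support as `A_{r,n}`. -/
theorem second_class_Q_small_radius_doubly_stochastic (n r : ℕ)
    (h1 : 1 ≤ r) (h2 : 2 * r + 2 ≤ n)
    (α : ℝ) (hα : 0 < α) (hαeq : α ^ (r + 1) - α - 1 = 0)
    (C : ℝ) (hC : C = (α - 1) / (α + 1))
    (Q : Matrix (Fin n) (Fin n) ℝ)
    (hQ : ∀ i j : Fin n,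
      Q i j =
        (if |((i : ℕ) : ℤ) - ((j : ℕ) : ℤ)| ≤ (r : ℤ) then (1 : ℝ) else 0) * C *
          (if ((i : ℕ) + 1 ≤ r + 1) ∧ ((j : ℕ) + 1 ≤ r + 1) then
            α ^ ((r + 1 - ((i : ℕ) + 1)) + (r + 1 - ((j : ℕ) + 1)))
          else if (n - r ≤ (i : ℕ) + 1) ∧ (n - r ≤ (j : ℕ) + 1) then
            α ^ ((((i : ℕ) + 1) - (n - r)) + (((j : ℕ) + 1) - (n - r)))
          else
            α ^ (((i : ℕ) : ℤ) - ((j : ℕ) : ℤ)).natAbs)) :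
    (∀ i j, 0 ≤ Q i j) ∧
    (∀ i, ∑ j, Q i j = 1) ∧
    (∀ j, ∑ i, Q i j = 1) ∧
    (∀ i j : Fin n, Q i j ≠ 0 ↔ |((i : ℕ) : ℤ) - ((j : ℕ) : ℤ)| ≤ (r : ℤ)) := by
  have hpow : α ^ (r + 1) = α + 1 := by linarith
  have hα1 : 1 < α := by
    by_contra hcon
    push_neg at hcon
    have h3 : α ^ (r + 1) ≤ α ^ 1 := pow_le_pow_of_le_one hα.le hcon (by omega)
    rw [pow_one] at h3
    linarith
  have hne1 : α ≠ 1 := hα1.ne'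
  have hCpos : 0 < C := by
    rw [hC]; exact div_pos (by linarith) (by linarith)
  have hQF : ∀ i j : Fin n, Q i j = qfull α C n r (i : ℕ) (j : ℕ) := by
    intro i j; rw [hQ]; rfl
  -- row sums
  have hrow : ∀ i : Fin n, ∑ j, Q i j = 1 := by
    rintro ⟨a, ha⟩
    have hstep : ∑ j, Q ⟨a, ha⟩ j = ∑ x ∈ Finset.range n, qfull α C n r a x := by
      rw [← Fin.sum_univ_eq_sum_range (fun x => qfull α C n r a x) n]
      exact Finset.sum_congr rfl fun j _ => hQF ⟨a, ha⟩ j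
    rw [hstep]
    by_cases hA : a ≤ r
    · -- top rows
      have hsub : Finset.Ico 0 (a + r + 1) ⊆ Finset.range n := by
        intro x hx
        simp only [Finset.mem_Ico, Finset.mem_range] at *
        omega
      have hzero : ∀ x ∈ Finset.range n, x ∉ Finset.Ico 0 (a + r + 1) →
          qfull α C n r a x = 0 := by
        intro x hx hnx
        simp only [Finset.mem_range] at hx
        simp only [Finset.mem_Ico] at hnx
        have hcond : ¬(|(a : ℤ) - (x : ℤ)| ≤ (r : ℤ)) := by
          rw [abs_le]; omega
        unfold qfull
        rw [if_neg hcond]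
        ring
      rw [← Finset.sum_subset hsub hzero]
      have hind : ∀ x ∈ Finset.Ico 0 (a + r + 1),
          qfull α C n r a x = C * qt α n r a x := by
        intro x hx
        simp only [Finset.mem_Ico] at hx
        have hcond : |(a : ℤ) - (x : ℤ)| ≤ (r : ℤ) := by
          rw [abs_le]; omega
        unfold qfull
        rw [if_pos hcond, one_mul]
      rw [Finset.sum_congr rfl hind]
      rw [← Finset.sum_Ico_consecutive (fun j => C * qt α n r a j)
        (Nat.zero_le (r + 1)) (show r + 1 ≤ a + r + 1 by omega)]
      have e1 : ∑ j ∈ Finset.Ico 0 (r + 1), C * qt α n r a j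
          = C * α ^ (r - a) * ∑ k ∈ Finset.range (r + 1), α ^ k := by
        rw [Finset.mul_sum, ← Finset.sum_range_reflect
          (fun k => C * α ^ (r - a) * α ^ k) (r + 1)]
        apply Finset.sum_congr (Finset.range_eq_Ico (r + 1)).symm
        intro j hj
        simp only [Finset.mem_range] at hj
        simp only [qt]
        rw [if_pos ⟨by omega, by omega⟩, mul_assoc, ← pow_add]
        congr 1
        congr 1
        omega
      have e2 : ∑ j ∈ Finset.Ico (r + 1) (a + r + 1), C * qt α n r a j
          = C * α ^ (r + 1 - a) * ∑ k ∈ Finset.range a, α ^ k := by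
        rw [Finset.sum_Ico_eq_sum_range, show a + r + 1 - (r + 1) = a from by omega,
          Finset.mul_sum]
        refine Finset.sum_congr rfl fun k hk => ?_
        simp only [Finset.mem_range] at hk
        simp only [qt]
        have hc1 : ¬(a + 1 ≤ r + 1 ∧ r + 1 + k + 1 ≤ r + 1) := by omega
        have hc2 : ¬(n - r ≤ a + 1 ∧ n - r ≤ r + 1 + k + 1) := by omega
        rw [if_neg hc1, if_neg hc2, mul_assoc, ← pow_add]
        congr 1
        congr 1
        omega
      rw [e1, e2, hC]
      exact key1 α hα1 r a hA hpow
    · by_cases hB : a ≤ n - r - 2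
      · -- middle rows
        have hsub : Finset.Ico (a - r) (a + r + 1) ⊆ Finset.range n := by
          intro x hx
          simp only [Finset.mem_Ico, Finset.mem_range] at *
          omega
        have hzero : ∀ x ∈ Finset.range n, x ∉ Finset.Ico (a - r) (a + r + 1) →
            qfull α C n r a x = 0 := by
          intro x hx hnx
          simp only [Finset.mem_range] at hx
          simp only [Finset.mem_Ico] at hnx
          have hcond : ¬(|(a : ℤ) - (x : ℤ)| ≤ (r : ℤ)) := by
            rw [abs_le]; omega
          unfold qfull
          rw [if_neg hcond]
          ring
        rw [← Finset.sum_subset hsub hzero]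
        have hind : ∀ x ∈ Finset.Ico (a - r) (a + r + 1),
            qfull α C n r a x = C * qt α n r a x := by
          intro x hx
          simp only [Finset.mem_Ico] at hx
          have hcond : |(a : ℤ) - (x : ℤ)| ≤ (r : ℤ) := by
            rw [abs_le]; omega
          unfold qfull
          rw [if_pos hcond, one_mul]
        rw [Finset.sum_congr rfl hind]
        rw [Finset.sum_Ico_eq_sum_range, show a + r + 1 - (a - r) = 2 * r + 1 from by omega]
        rw [Finset.range_eq_Ico, ← Finset.sum_Ico_consecutive
          (fun k => C * qt α n r a (a - r + k))
          (Nat.zero_le (r + 1)) (show r + 1 ≤ 2 * r + 1 by omega)]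
        have f1 : ∑ k ∈ Finset.Ico 0 (r + 1), C * qt α n r a (a - r + k)
            = C * ∑ t ∈ Finset.range (r + 1), α ^ t := by
          rw [Finset.mul_sum, ← Finset.sum_range_reflect (fun t => C * α ^ t) (r + 1)]
          apply Finset.sum_congr (Finset.range_eq_Ico (r + 1)).symm
          intro k hk
          simp only [Finset.mem_range] at hk
          simp only [qt]
          have hc1 : ¬(a + 1 ≤ r + 1 ∧ a - r + k + 1 ≤ r + 1) := by omega
          have hc2 : ¬(n - r ≤ a + 1 ∧ n - r ≤ a - r + k + 1) := by omega
          rw [if_neg hc1, if_neg hc2]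
          congr 1
          congr 1
          omega
        have f2 : ∑ k ∈ Finset.Ico (r + 1) (2 * r + 1), C * qt α n r a (a - r + k)
            = C * α ^ 1 * ∑ t ∈ Finset.range r, α ^ t := by
          rw [Finset.sum_Ico_eq_sum_range, show 2 * r + 1 - (r + 1) = r from by omega,
            Finset.mul_sum]
          refine Finset.sum_congr rfl fun t ht => ?_
          simp only [Finset.mem_range] at ht
          simp only [qt]
          have hc1 : ¬(a + 1 ≤ r + 1 ∧ a - r + (r + 1 + t) + 1 ≤ r + 1) := by omega
          have hc2 : ¬(n - r ≤ a + 1 ∧ n - r ≤ a - r + (r + 1 + t) + 1) := by omega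
          rw [if_neg hc1, if_neg hc2, mul_assoc, ← pow_add]
          congr 1
          congr 1
          omega
        rw [f1, f2, hC]
        exact key2 α hα1 r hpow
      · -- bottom rows
        have hsub : Finset.Ico (a - r) n ⊆ Finset.range n := by
          intro x hx
          simp only [Finset.mem_Ico, Finset.mem_range] at *
          omega
        have hzero : ∀ x ∈ Finset.range n, x ∉ Finset.Ico (a - r) n →
            qfull α C n r a x = 0 := by
          intro x hx hnx
          simp only [Finset.mem_range] at hx
          simp only [Finset.mem_Ico] at hnx
          have hcond : ¬(|(a : ℤ) - (x : ℤ)| ≤ (r : ℤ)) := by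
            rw [abs_le]; omega
          unfold qfull
          rw [if_neg hcond]
          ring
        rw [← Finset.sum_subset hsub hzero]
        have hind : ∀ x ∈ Finset.Ico (a - r) n,
            qfull α C n r a x = C * qt α n r a x := by
          intro x hx
          simp only [Finset.mem_Ico] at hx
          have hcond : |(a : ℤ) - (x : ℤ)| ≤ (r : ℤ) := by
            rw [abs_le]; omega
          unfold qfull
          rw [if_pos hcond, one_mul]
        rw [Finset.sum_congr rfl hind]
        rw [← Finset.sum_Ico_consecutive (fun j => C * qt α n r a j)
          (show a - r ≤ n - r - 1 by omega) (show n - r - 1 ≤ n by omega)]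
        have g1 : ∑ j ∈ Finset.Ico (a - r) (n - r - 1), C * qt α n r a j
            = C * α ^ (r + 1 - (n - 1 - a)) * ∑ t ∈ Finset.range (n - 1 - a), α ^ t := by
          rw [Finset.sum_Ico_eq_sum_range, show n - r - 1 - (a - r) = n - 1 - a from by omega,
            Finset.mul_sum, ← Finset.sum_range_reflect
            (fun t => C * α ^ (r + 1 - (n - 1 - a)) * α ^ t) (n - 1 - a)]
          refine Finset.sum_congr rfl fun k hk => ?_
          simp only [Finset.mem_range] at hk
          simp only [qt]
          have hc1 : ¬(a + 1 ≤ r + 1 ∧ a - r + k + 1 ≤ r + 1) := by omega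
          have hc2 : ¬(n - r ≤ a + 1 ∧ n - r ≤ a - r + k + 1) := by omega
          rw [if_neg hc1, if_neg hc2, mul_assoc, ← pow_add]
          congr 1
          congr 1
          omega
        have g2 : ∑ j ∈ Finset.Ico (n - r - 1) n, C * qt α n r a j
            = C * α ^ (r - (n - 1 - a)) * ∑ t ∈ Finset.range (r + 1), α ^ t := by
          rw [Finset.sum_Ico_eq_sum_range, show n - (n - r - 1) = r + 1 from by omega,
            Finset.mul_sum]
          refine Finset.sum_congr rfl fun k hk => ?_
          simp only [Finset.mem_range] at hk
          simp only [qt]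
          have hc1 : ¬(a + 1 ≤ r + 1 ∧ n - r - 1 + k + 1 ≤ r + 1) := by omega
          have hc2 : n - r ≤ a + 1 ∧ n - r ≤ n - r - 1 + k + 1 := ⟨by omega, by omega⟩
          rw [if_neg hc1, if_pos hc2, mul_assoc, ← pow_add]
          congr 1
          congr 1
          omega
        rw [g1, g2, hC, add_comm]
        exact key1 α hα1 r (n - 1 - a) (by omega) hpow
  -- symmetry
  have hsymmQ : ∀ i j : Fin n, Q i j = Q j i := by
    intro i j
    rw [hQ i j, hQ j i, abs_sub_comm]
    congr 1
    split_ifs <;> (congr 1; omega)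
  have hcol : ∀ j : Fin n, ∑ i, Q i j = 1 := by
    intro j
    rw [Finset.sum_congr rfl fun i _ => hsymmQ i j]
    exact hrow j
  have hnonneg : ∀ i j, 0 ≤ Q i j := by
    intro i j
    rw [hQ]
    split_ifs <;>
      first
        | exact mul_nonneg (mul_nonneg zero_le_one hCpos.le) (pow_pos hα _).le
        | simp
  have hsupp : ∀ i j : Fin n, Q i j ≠ 0 ↔ |((i : ℕ) : ℤ) - ((j : ℕ) : ℤ)| ≤ (r : ℤ) := by
    intro i j
    rw [hQ]
    constructor
    · intro hne
      by_contra hc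
      exact hne (by rw [if_neg hc]; ring)
    · intro hle
      rw [if_pos hle, one_mul]
      split_ifs <;> exact mul_ne_zero (ne_of_gt hCpos) (pow_pos hα _).ne'
  exact ⟨hnonneg, hrow, hcol, hsupp⟩
end

section
/- Let n be a positive integer and r an integer with 0 ≤ r ≤ n-1. If 0 < r ≤ (n-1)/2, then |B_{r,n}| ≤ ((2r+1)!)^{(n-2r)/(2r+1)} · ∏_{i=r+1}^{2r} (i!)^{2/i}. If (n-1)/2 ≤ r ≤ n-1, then |B_{r,n}| ≤ (n!)^{(2r+2-n)/n} · ∏_{i=r+1}^{n-1} (i!)^{2/i}. (Here the exponents are real numbers and powers are real powers.) -/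
set_option maxHeartbeats 2000000
open Finset Real


noncomputable def FF (m : ℕ) : ℝ := (m.factorial : ℝ) ^ ((m : ℝ)⁻¹)

lemma FF_nonneg (m : ℕ) : 0 ≤ FF m := Real.rpow_nonneg (Nat.cast_nonneg _) _

lemma one_le_FF (m : ℕ) : 1 ≤ FF m :=
  Real.one_le_rpow (by exact_mod_cast m.factorial_pos) (by positivity)

lemma FF_pow_self {m : ℕ} (hm : m ≠ 0) : FF m ^ m = (m.factorial : ℝ) := by
  rw [FF, ← Real.rpow_natCast ((m.factorial : ℝ) ^ ((m : ℝ)⁻¹)) m,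
    ← Real.rpow_mul (Nat.cast_nonneg _), inv_mul_cancel₀ (by exact_mod_cast hm),
    Real.rpow_one]

lemma FF_pred_pow {m : ℕ} (hm : 1 ≤ m) :
    (m : ℝ) * FF (m - 1) ^ (m - 1) = FF m ^ m := by
  rcases Nat.eq_or_lt_of_le hm with h | h
  · simp [← h, FF]
  · have h1 : m - 1 ≠ 0 := by omega
    rw [FF_pow_self h1, FF_pow_self (by omega)]
    rw [show ((m - 1).factorial : ℝ) = ((m-1).factorial : ℝ) from rfl]
    have : m.factorial = m * (m-1).factorial := by
      conv_lhs => rw [show m = (m-1) + 1 by omega]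
      rw [Nat.factorial_succ]; congr 1; omega
    rw [this]; push_cast; ring

lemma step7 {m nn : ℕ} (h1 : 1 ≤ m) (h2 : m ≤ nn) :
    (m : ℝ) * FF (m - 1) ^ (m - 1) * FF m ^ (nn - m) = FF m ^ nn := by
  rw [FF_pred_pow h1, ← pow_add]; congr 1; omega

/-- Jensen-type inequality used in Schrijver's proof of Bregman's theorem. -/
lemma jensen_pow {β : Type*} (t : Finset β) (f : β → ℕ) :
    ((∑ k ∈ t, (f k : ℝ)) / t.card) ^ (∑ k ∈ t, f k) ≤ ∏ k ∈ t, (f k : ℝ) ^ (f k) := by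
  rcases Nat.eq_zero_or_pos t.card with h0 | h0
  · simp [Finset.card_eq_zero.mp h0]
  set s : ℕ := ∑ k ∈ t, f k with hs
  rcases Nat.eq_zero_or_pos s with hs0 | hs0
  · have hz : ∀ k ∈ t, f k = 0 := fun k hk => Finset.sum_eq_zero_iff.mp hs0 k hk
    have h1 : ((∑ k ∈ t, (f k : ℝ)) / t.card) ^ (∑ k ∈ t, f k) = 1 := by
      rw [show (∑ k ∈ t, f k) = s from rfl, hs0]; ring
    rw [h1, Finset.prod_congr rfl (fun k hk => by rw [hz k hk])]
    simp
  · -- main case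
    have hr : (0:ℝ) < t.card := by exact_mod_cast h0
    have hsum : (∑ k ∈ t, (f k : ℝ)) = (s : ℝ) := by push_cast [hs]; rfl
    have hspos : (0:ℝ) < s := by exact_mod_cast hs0
    -- Jensen
    have hj := (Real.convexOn_mul_log).map_sum_le (t := t)
      (w := fun _ => ((t.card : ℝ))⁻¹) (p := fun k => (f k : ℝ))
      (fun i _ => by positivity)
      (by rw [Finset.sum_const, nsmul_eq_mul]; exact mul_inv_cancel₀ hr.ne')
      (fun i _ => Set.mem_Ici.mpr (Nat.cast_nonneg _))
    have havg : (∑ k ∈ t, ((t.card : ℝ))⁻¹ • (f k : ℝ)) = (s : ℝ) / t.card := by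
      rw [← Finset.smul_sum, hsum]; simp [div_eq_inv_mul]
    rw [havg] at hj
    have hlog : (s : ℝ) * Real.log ((s:ℝ) / t.card) ≤ ∑ k ∈ t, (f k : ℝ) * Real.log (f k) := by
      have := mul_le_mul_of_nonneg_left hj (le_of_lt hr)
      calc (s : ℝ) * Real.log ((s:ℝ)/t.card)
          = (t.card : ℝ) * (((s:ℝ)/t.card) * Real.log ((s:ℝ)/t.card)) := by
            field_simp
        _ ≤ (t.card : ℝ) * ∑ k ∈ t, ((t.card:ℝ))⁻¹ * ((f k : ℝ) * Real.log (f k)) := this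
        _ = ∑ k ∈ t, (f k : ℝ) * Real.log (f k) := by
            rw [Finset.mul_sum]; apply Finset.sum_congr rfl; intro k _; field_simp
    -- exponentiate
    have hLHSpos : (0:ℝ) < ((s:ℝ)/t.card) ^ s := by positivity
    have hRHSpos : (0:ℝ) < ∏ k ∈ t, (f k : ℝ) ^ (f k) := by
      apply Finset.prod_pos; intro k _
      rcases Nat.eq_zero_or_pos (f k) with h | h
      · simp [h]
      · positivity
    rw [hsum, ← Real.log_le_log_iff hLHSpos hRHSpos]
    rw [Real.log_pow, Real.log_prod (fun k _ => by
      rcases Nat.eq_zero_or_pos (f k) with h | h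
      · simp [h]
      · positivity)]
    calc (s : ℝ) * Real.log ((s:ℝ)/t.card) ≤ ∑ k ∈ t, (f k : ℝ) * Real.log (f k) := hlog
      _ = ∑ k ∈ t, Real.log ((f k : ℝ) ^ (f k)) := by
          apply Finset.sum_congr rfl; intro k _; rw [Real.log_pow]


open scoped Classical in
noncomputable def permCount {α β : Type} [Fintype α] [Fintype β] (A : α → β → Prop) : ℕ :=
  (Finset.univ.filter (fun σ : α ≃ β => ∀ i, A i (σ i))).card

open scoped Classical in
noncomputable def rowSum {α β : Type} [Fintype α] [Fintype β] (A : α → β → Prop) (i : α) : ℕ :=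
  (Finset.univ.filter (fun k => A i k)).card

open scoped Classical in
noncomputable def fiberCount {α β : Type} [Fintype α] [Fintype β] (A : α → β → Prop)
    (i : α) (k : β) : ℕ :=
  (Finset.univ.filter (fun σ : α ≃ β => (∀ j, A j (σ j)) ∧ σ i = k)).card

open scoped Classical

variable {α β : Type} [Fintype α] [Fintype β]

lemma sum_fiberCount (A : α → β → Prop) (i : α) :
    ∑ k : β, fiberCount A i k = permCount A := by
  rw [permCount, Finset.card_eq_sum_card_fiberwise (f := fun σ : α ≃ β => σ i)
    (t := Finset.univ) (fun σ _ => Finset.mem_univ _)]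
  apply Finset.sum_congr rfl
  intro k _
  rw [fiberCount, Finset.filter_filter]

lemma fiberCount_eq_zero {A : α → β → Prop} {i : α} {k : β} (h : ¬ A i k) :
    fiberCount A i k = 0 := by
  rw [fiberCount, Finset.card_eq_zero, Finset.filter_eq_empty_iff]
  rintro σ - ⟨h1, h2⟩
  exact h (h2 ▸ h1 i)

lemma rowSum_restrict (A : α → β → Prop) (i : α) (k : β) (j : {x : α // x ≠ i}) :
    rowSum (fun (x : {x : α // x ≠ i}) (y : {y : β // y ≠ k}) => A x y) j
      = rowSum A j - (if A (j : α) k then 1 else 0) := by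
  have h1 : rowSum (fun (x : {x : α // x ≠ i}) (y : {y : β // y ≠ k}) => A x y) j
      = Fintype.card {y : {y : β // y ≠ k} // A (j : α) (y : β)} := by
    rw [rowSum, Fintype.card_subtype]
  have h2 : Fintype.card {y : {y : β // y ≠ k} // A (j : α) (y : β)}
      = Fintype.card {y : β // y ≠ k ∧ A (j : α) y} :=
    Fintype.card_congr (Equiv.subtypeSubtypeEquivSubtypeInter _ _)
  rw [h1, h2, Fintype.card_subtype]
  have h3 : (Finset.univ.filter (fun y : β => y ≠ k ∧ A (j : α) y))
      = (Finset.univ.filter (fun y : β => A (j : α) y)).erase k := by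
    ext y; simp [Finset.mem_erase, and_comm]
  rw [h3, rowSum]
  by_cases hA : A (j : α) k
  · rw [if_pos hA, Finset.card_erase_of_mem (by simp [hA])]
  · rw [if_neg hA, Finset.erase_eq_of_notMem (by simp [hA])]
    simp

lemma restrict_card_le (A : α → β → Prop) (i : α) (k : β) :
    fiberCount A i k
      ≤ permCount (fun (x : {x : α // x ≠ i}) (y : {y : β // y ≠ k}) => A x y) := by
  have e1 : fiberCount A i k
      = Fintype.card {σ : α ≃ β // (∀ j, A j (σ j)) ∧ σ i = k} := by
    rw [fiberCount, Fintype.card_subtype]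
  have e2 : permCount (fun (x : {x : α // x ≠ i}) (y : {y : β // y ≠ k}) => A x y)
      = Fintype.card {τ : {x : α // x ≠ i} ≃ {y : β // y ≠ k} //
          ∀ x : {x : α // x ≠ i}, A (x : α) (((τ x) : β))} := by
    rw [permCount, Fintype.card_subtype]; congr!
  rw [e1, e2]
  apply Fintype.card_le_of_injective
    (f := fun σp =>
      ⟨⟨fun x => ⟨σp.1 x, fun e => x.2 (σp.1.injective (e.trans σp.2.2.symm))⟩,
        fun y => ⟨σp.1.symm y, fun e => y.2 (by
          have h1 : (y : β) = σp.1 (σp.1.symm (y : β)) := (σp.1.apply_symm_apply _).symm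
          rw [e] at h1
          exact h1.trans σp.2.2)⟩,
        fun x => by ext; simp,
        fun y => by ext; simp⟩,
      fun x => σp.2.1 x⟩)
  rintro ⟨σ, hσ⟩ ⟨σ', hσ'⟩ h
  have h' : ∀ x : {x : α // x ≠ i}, σ (x : α) = σ' (x : α) := by
    intro x
    have := congrArg (fun τ => ((τ.1 x : {y : β // y ≠ k}) : β)) h
    exact this
  ext x
  by_cases hx : x = i
  · rw [hx, hσ.2, hσ'.2]
  · exact h' ⟨x, hx⟩

lemma prod_fiber_eq (A : α → β → Prop) (i : α) (g : β → ℝ) :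
    ∏ σ ∈ Finset.univ.filter (fun σ : α ≃ β => ∀ j, A j (σ j)), g (σ i)
      = ∏ k : β, g k ^ (fiberCount A i k) := by
  rw [← Finset.prod_fiberwise_of_maps_to (g := fun σ : α ≃ β => σ i)
    (t := Finset.univ) (fun σ _ => Finset.mem_univ _)]
  apply Finset.prod_congr rfl
  intro k _
  rw [Finset.prod_congr rfl (fun σ hσ => by
      rw [(Finset.mem_filter.mp hσ).2]), Finset.prod_const, fiberCount,
    Finset.filter_filter]

theorem bregman_core : ∀ (n : ℕ) {α β : Type} [Fintype α] [Fintype β]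
    (A : α → β → Prop), Fintype.card α = n →
    (permCount A : ℝ) ≤ ∏ i : α, FF (rowSum A i) := by
  intro n
  induction n using Nat.strong_induction_on with
  | _ n IH =>
  intro α β _ _ A hcard
  by_cases hP0 : permCount A = 0
  · rw [hP0]
    push_cast
    exact Finset.prod_nonneg (fun i _ => FF_nonneg _)
  have hP1 : 0 < permCount A := Nat.pos_of_ne_zero hP0
  obtain ⟨σ₀, hσ₀⟩ : ∃ σ : α ≃ β, ∀ j, A j (σ j) := by
    obtain ⟨σ, hσ⟩ := Finset.card_pos.mp (show 0 < (Finset.univ.filter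
      (fun σ : α ≃ β => ∀ i, A i (σ i))).card from hP1)
    exact ⟨σ, (Finset.mem_filter.mp hσ).2⟩
  have hcardβ : Fintype.card β = n := by rw [← hcard]; exact (Fintype.card_congr σ₀).symm
  rcases Nat.eq_zero_or_pos n with hn0 | hn0
  · have hα : IsEmpty α := Fintype.card_eq_zero_iff.mp (by rw [hcard, hn0])
    have h1 : permCount A ≤ 1 := by
      have h := Finset.card_filter_le (Finset.univ : Finset (α ≃ β))
        (fun σ => ∀ j, A j (σ j))
      rwa [Finset.card_univ, Fintype.card_equiv σ₀, hcard, hn0, Nat.factorial_zero] at h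
    have h2 : (∏ i : α, FF (rowSum A i)) = 1 := by
      rw [Finset.univ_eq_empty, Finset.prod_empty]
    rw [h2]; exact_mod_cast h1
  -- main case
  have hr1 : ∀ i, 1 ≤ rowSum A i := fun i =>
    Finset.card_pos.mpr ⟨σ₀ i, by simp [hσ₀ i]⟩
  have hrle : ∀ i, rowSum A i ≤ n := fun i =>
    (Finset.card_filter_le _ _).trans_eq (by rw [Finset.card_univ, hcardβ])
  -- Step I
  have key1 : ∀ i : α, ((permCount A : ℝ))^(permCount A)
      ≤ (rowSum A i : ℝ)^(permCount A)
        * ∏ k : β, (fiberCount A i k : ℝ)^(fiberCount A i k) := by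
    intro i
    have hsum_t : ∑ k ∈ Finset.univ.filter (fun k => A i k), fiberCount A i k
        = permCount A := by
      rw [← sum_fiberCount A i]
      exact (Finset.sum_subset (Finset.subset_univ (Finset.univ.filter (fun k => A i k)))
        (fun k _ hk => fiberCount_eq_zero (α := α) (β := β) (A := A) (i := i) (k := k)
          (by simpa using hk)))
    have hj := jensen_pow (Finset.univ.filter (fun k => A i k))
      (fun k => fiberCount A i k)
    have hc : (∑ k ∈ Finset.univ.filter (fun k => A i k), ((fiberCount A i k : ℕ) : ℝ))
        = (permCount A : ℝ) := by exact_mod_cast congrArg (Nat.cast (R := ℝ)) hsum_t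
    rw [hc, hsum_t] at hj
    have ht : (Finset.univ.filter (fun k => A i k)).card = rowSum A i := rfl
    rw [ht] at hj
    have hext : (∏ k ∈ Finset.univ.filter (fun k => A i k),
        (fiberCount A i k:ℝ)^(fiberCount A i k))
        = ∏ k : β, (fiberCount A i k:ℝ)^(fiberCount A i k) :=
      Finset.prod_subset (Finset.subset_univ _)
        (fun k _ hk => by rw [fiberCount_eq_zero (by simpa using hk)]; norm_num)
    rw [hext] at hj
    have hident : ((permCount A : ℝ))^(permCount A)
        = (rowSum A i : ℝ)^(permCount A)
          * ((permCount A : ℝ)/(rowSum A i : ℝ))^(permCount A) := by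
      rw [← mul_pow, mul_div_cancel₀]
      have := hr1 i; positivity
    rw [hident]
    exact mul_le_mul_of_nonneg_left hj (by positivity)
  -- Step III
  have key3 : ∀ (i : α) (k : β), (fiberCount A i k : ℝ)
      ≤ ∏ j ∈ Finset.univ.erase i, FF (rowSum A j - if A j k then 1 else 0) := by
    intro i k
    have hcards : Fintype.card {x : α // x ≠ i} = n - 1 := by
      rw [Fintype.card_subtype_compl (fun x => x = i), Fintype.card_subtype_eq, hcard]
    have h2 := IH (n-1) (by omega)
      (fun (x : {x : α // x ≠ i}) (y : {y : β // y ≠ k}) => A x y) hcards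
    have h1 : (fiberCount A i k : ℝ)
        ≤ (permCount (fun (x : {x : α // x ≠ i}) (y : {y : β // y ≠ k}) => A x y) : ℝ) := by
      exact_mod_cast restrict_card_le A i k
    refine h1.trans (h2.trans (le_of_eq ?_))
    rw [Finset.prod_congr rfl (fun j _ => by rw [rowSum_restrict A i k j])]
    exact (Finset.prod_subtype (Finset.univ.erase i) (fun x => by simp)
      (fun j => FF (rowSum A j - if A j k then 1 else 0))).symm
  -- Step IV
  have key4 : ∀ σ ∈ Finset.univ.filter (fun σ : α ≃ β => ∀ j, A j (σ j)),
      (∏ i : α, ((rowSum A i : ℝ)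
        * ∏ j ∈ Finset.univ.erase i, FF (rowSum A j - if A j (σ i) then 1 else 0)))
      = (∏ j : α, FF (rowSum A j))^n := by
    intro σ hσ
    have hAσ : ∀ j, A j (σ j) := (Finset.mem_filter.mp hσ).2
    rw [Finset.prod_mul_distrib]
    have hswap : (∏ i : α, ∏ j ∈ Finset.univ.erase i,
          FF (rowSum A j - if A j (σ i) then 1 else 0))
        = ∏ j : α, ∏ i ∈ Finset.univ.erase j,
          FF (rowSum A j - if A j (σ i) then 1 else 0) := by
      exact Finset.prod_comm' (fun x y => by
        simp [Finset.mem_erase]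
        tauto)
    rw [hswap, ← Finset.prod_mul_distrib]
    have : ∀ j : α, ((rowSum A j : ℝ) * ∏ i ∈ Finset.univ.erase j,
        FF (rowSum A j - if A j (σ i) then 1 else 0)) = FF (rowSum A j) ^ n := by
      intro j
      have hreindex : (∏ i ∈ Finset.univ.erase j,
            FF (rowSum A j - if A j (σ i) then 1 else 0))
          = ∏ y ∈ Finset.univ.erase (σ j),
            FF (rowSum A j - if A j y then 1 else 0) := by
        refine Finset.prod_bij' (fun i _ => σ i) (fun y _ => σ.symm y)
          (fun a ha => ?_) (fun y hy => ?_) (fun a _ => by simp) (fun y _ => by simp)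
          (fun a _ => rfl)
        · simp only [Finset.mem_erase, Finset.mem_univ, and_true, ne_eq] at ha ⊢
          exact fun e => ha (σ.injective e)
        · simp only [Finset.mem_erase, Finset.mem_univ, and_true, ne_eq] at hy ⊢
          exact fun e => hy ((σ.apply_symm_apply y).symm.trans (congrArg σ e))
      rw [hreindex,
        ← Finset.prod_filter_mul_prod_filter_not (Finset.univ.erase (σ j)) (fun y => A j y)]
      have hc1 : ((Finset.univ.erase (σ j)).filter (fun y => A j y))
          = (Finset.univ.filter (fun y => A j y)).erase (σ j) := by
        ext y; simp [Finset.mem_erase]; try tauto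
      have hcard1 : ((Finset.univ.erase (σ j)).filter (fun y => A j y)).card
          = rowSum A j - 1 := by
        rw [hc1, Finset.card_erase_of_mem (by simp [hAσ j])]; rfl
      have hcard2 : ((Finset.univ.erase (σ j)).filter (fun y => ¬ A j y)).card
          = n - rowSum A j := by
        have htot := Finset.card_filter_add_card_filter_not
          (s := Finset.univ.erase (σ j)) (p := fun y => A j y)
        rw [Finset.card_erase_of_mem (Finset.mem_univ _), Finset.card_univ, hcardβ,
          hcard1] at htot
        have := hr1 j; have := hrle j
        omega
      rw [Finset.prod_congr rfl (fun y hy => by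
          rw [if_pos (Finset.mem_filter.mp hy).2]),
        Finset.prod_congr (rfl :
            ((Finset.univ.erase (σ j)).filter (fun y => ¬ A j y)) = _)
          (fun y hy => by
          rw [if_neg (Finset.mem_filter.mp hy).2, Nat.sub_zero]),
        Finset.prod_const, Finset.prod_const, hcard1, hcard2, ← mul_assoc]
      exact step7 (hr1 j) (hrle j)
    rw [Finset.prod_congr rfl (fun j _ => this j), Finset.prod_pow]
  -- assemble
  have hSP : (Finset.univ.filter (fun σ : α ≃ β => ∀ j, A j (σ j))).card = permCount A := rfl
  have main : ((permCount A : ℝ))^(n * permCount A)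
      ≤ (∏ j : α, FF (rowSum A j))^(n * permCount A) := by
    calc ((permCount A : ℝ))^(n * permCount A)
        = ∏ _i : α, ((permCount A : ℝ))^(permCount A) := by
          rw [Finset.prod_const, Finset.card_univ, hcard, ← pow_mul, mul_comm]
      _ ≤ ∏ i : α, ((rowSum A i : ℝ)^(permCount A)
            * ∏ σ ∈ Finset.univ.filter (fun σ : α ≃ β => ∀ j, A j (σ j)),
              (fiberCount A i (σ i) : ℝ)) := by
          apply Finset.prod_le_prod (fun i _ => by positivity)
          intro i _
          calc ((permCount A : ℝ))^(permCount A)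
              ≤ (rowSum A i : ℝ)^(permCount A)
                * ∏ k : β, (fiberCount A i k : ℝ)^(fiberCount A i k) := key1 i
            _ = _ := by rw [← prod_fiber_eq A i (fun k => (fiberCount A i k : ℝ))]
      _ = ∏ i : α, ∏ σ ∈ Finset.univ.filter (fun σ : α ≃ β => ∀ j, A j (σ j)),
            ((rowSum A i : ℝ) * (fiberCount A i (σ i) : ℝ)) := by
          apply Finset.prod_congr rfl
          intro i _
          rw [Finset.prod_mul_distrib, Finset.prod_const, hSP]
      _ = ∏ σ ∈ Finset.univ.filter (fun σ : α ≃ β => ∀ j, A j (σ j)),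
            ∏ i : α, ((rowSum A i : ℝ) * (fiberCount A i (σ i) : ℝ)) :=
          Finset.prod_comm
      _ ≤ ∏ σ ∈ Finset.univ.filter (fun σ : α ≃ β => ∀ j, A j (σ j)),
            ∏ i : α, ((rowSum A i : ℝ)
              * ∏ j ∈ Finset.univ.erase i, FF (rowSum A j - if A j (σ i) then 1 else 0)) := by
          apply Finset.prod_le_prod
            (fun σ _ => Finset.prod_nonneg (fun i _ => by positivity))
          intro σ _
          apply Finset.prod_le_prod (fun i _ => by positivity)
          intro i _
          exact mul_le_mul_of_nonneg_left (key3 i (σ i)) (by positivity)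
      _ = ∏ σ ∈ Finset.univ.filter (fun σ : α ≃ β => ∀ j, A j (σ j)),
            (∏ j : α, FF (rowSum A j))^n := Finset.prod_congr rfl key4
      _ = (∏ j : α, FF (rowSum A j))^(n * permCount A) := by
          rw [Finset.prod_const, hSP, ← pow_mul, mul_comm]
  have hC0 : (0:ℝ) ≤ ∏ j : α, FF (rowSum A j) :=
    Finset.prod_nonneg (fun j _ => FF_nonneg (rowSum A j))
  have hne : n * permCount A ≠ 0 := by positivity
  exact (pow_le_pow_iff_left₀ (by positivity) hC0 hne).mp main

lemma band_rowSum (n r : ℕ) (i : Fin n) :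
    rowSum (fun i k : Fin n => |((k : ℕ) : ℤ) - ((i : ℕ) : ℤ)| ≤ (r : ℤ)) i
      = min ((i : ℕ) + r + 1) n - ((i : ℕ) - r) := by
  rw [rowSum, show (min ((i : ℕ) + r + 1) n - ((i : ℕ) - r))
      = (Finset.Ico ((i : ℕ) - r) (min ((i : ℕ) + r + 1) n)).card
    from (Nat.card_Ico _ _).symm]
  refine Finset.card_bij' (fun k _ => (k : ℕ))
      (fun m hm => (⟨m, by simp only [Finset.mem_Ico] at hm; omega⟩ : Fin n))
      (fun k hk => ?_) (fun m hm => ?_) (fun k hk => ?_) (fun m hm => ?_)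
  · simp only [Finset.mem_filter, Finset.mem_univ, true_and, abs_le] at hk
    have := k.isLt
    simp only [Finset.mem_Ico]
    omega
  · simp only [Finset.mem_Ico] at hm
    simp only [Finset.mem_filter, Finset.mem_univ, true_and, abs_le]
    omega
  · rfl
  · rfl

lemma FF_pow_eq (m e : ℕ) (hm : m ≠ 0) :
    FF m ^ e = (m.factorial : ℝ) ^ ((e : ℝ)/(m : ℝ)) := by
  rw [FF, ← Real.rpow_natCast ((m.factorial : ℝ) ^ ((m : ℝ)⁻¹)) e,
    ← Real.rpow_mul (Nat.cast_nonneg _)]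
  congr 1
  have : (m : ℝ) ≠ 0 := Nat.cast_ne_zero.mpr hm
  field_simp

lemma prod_FF_sq (a b : ℕ) (ha : 1 ≤ a) :
    ∏ i ∈ Finset.Icc a b, (Nat.factorial i : ℝ) ^ ((2:ℝ)/(i:ℝ))
      = (∏ i ∈ Finset.Icc a b, FF i) * ∏ i ∈ Finset.Icc a b, FF i := by
  rw [← Finset.prod_mul_distrib]
  apply Finset.prod_congr rfl
  intro i hi
  have hi1 : i ≠ 0 := by have := (Finset.mem_Icc.mp hi).1; omega
  rw [show ((2:ℝ)/(i:ℝ)) = (((2:ℕ):ℝ)/(i:ℝ)) by norm_num, ← FF_pow_eq i 2 hi1, sq]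

lemma prod_band_case1 (n r : ℕ) (h : 2*r+1 ≤ n) :
    ∏ m ∈ Finset.range n, FF (min (m+r+1) n - (m-r))
      = (Nat.factorial (2*r+1) : ℝ) ^ (((n:ℝ) - 2*(r:ℝ))/(2*(r:ℝ)+1))
        * ∏ i ∈ Finset.Icc (r+1) (2*r), (Nat.factorial i : ℝ) ^ ((2:ℝ)/(i:ℝ)) := by
  rw [Finset.range_eq_Ico,
    ← Finset.prod_Ico_consecutive _ (Nat.zero_le r) (by omega : r ≤ n),
    ← Finset.prod_Ico_consecutive _ (by omega : r ≤ n - r) (by omega : n - r ≤ n)]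
  have hA : ∏ m ∈ Finset.Ico 0 r, FF (min (m+r+1) n - (m-r))
      = ∏ i ∈ Finset.Icc (r+1) (2*r), FF i := by
    refine Finset.prod_bij' (fun m _ => m+r+1) (fun i _ => i - (r+1))
      (fun a ha => ?_) (fun a ha => ?_) (fun a ha => ?_) (fun a ha => ?_) (fun a ha => ?_)
    all_goals simp only [Finset.mem_Ico, Finset.mem_Icc] at ha
    all_goals first
      | (simp only [Finset.mem_Ico, Finset.mem_Icc]; omega)
      | omega
      | (congr 1; beta_reduce; omega)
  have hB : ∏ m ∈ Finset.Ico r (n-r), FF (min (m+r+1) n - (m-r))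
      = (Nat.factorial (2*r+1) : ℝ) ^ (((n:ℝ) - 2*(r:ℝ))/(2*(r:ℝ)+1)) := by
    rw [Finset.prod_congr rfl (fun m hm =>
      (by have := Finset.mem_Ico.mp hm; congr 1; omega :
        FF (min (m+r+1) n - (m-r)) = FF (2*r+1))),
      Finset.prod_const, Nat.card_Ico, show n - r - r = n - 2*r by omega,
      FF_pow_eq _ _ (by omega)]
    congr 1
    rw [Nat.cast_sub (by omega)]
    push_cast
    ring
  have hC : ∏ m ∈ Finset.Ico (n-r) n, FF (min (m+r+1) n - (m-r))
      = ∏ i ∈ Finset.Icc (r+1) (2*r), FF i := by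
    refine Finset.prod_bij' (fun m _ => n+r-m) (fun i _ => n+r-i)
      (fun a ha => ?_) (fun a ha => ?_) (fun a ha => ?_) (fun a ha => ?_) (fun a ha => ?_)
    all_goals simp only [Finset.mem_Ico, Finset.mem_Icc] at ha
    all_goals first
      | (simp only [Finset.mem_Ico, Finset.mem_Icc]; omega)
      | omega
      | (congr 1; beta_reduce; omega)
  rw [hA, hB, hC, prod_FF_sq _ _ (by omega)]
  ring

lemma prod_band_case2 (n r : ℕ) (hn : 0 < n) (hr : r ≤ n - 1) (h : n ≤ 2*r+1) :
    ∏ m ∈ Finset.range n, FF (min (m+r+1) n - (m-r))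
      = (n.factorial : ℝ) ^ ((2*(r:ℝ)+2-(n:ℝ))/(n:ℝ))
        * ∏ i ∈ Finset.Icc (r+1) (n-1), (Nat.factorial i : ℝ) ^ ((2:ℝ)/(i:ℝ)) := by
  rw [Finset.range_eq_Ico,
    ← Finset.prod_Ico_consecutive _ (Nat.zero_le (n-r-1)) (by omega : n-r-1 ≤ n),
    ← Finset.prod_Ico_consecutive _ (by omega : n-r-1 ≤ r+1) (by omega : r+1 ≤ n)]
  have hA : ∏ m ∈ Finset.Ico 0 (n-r-1), FF (min (m+r+1) n - (m-r))
      = ∏ i ∈ Finset.Icc (r+1) (n-1), FF i := by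
    refine Finset.prod_bij' (fun m _ => m+r+1) (fun i _ => i - (r+1))
      (fun a ha => ?_) (fun a ha => ?_) (fun a ha => ?_) (fun a ha => ?_) (fun a ha => ?_)
    all_goals simp only [Finset.mem_Ico, Finset.mem_Icc] at ha
    all_goals first
      | (simp only [Finset.mem_Ico, Finset.mem_Icc]; omega)
      | omega
      | (congr 1; beta_reduce; omega)
  have hB : ∏ m ∈ Finset.Ico (n-r-1) (r+1), FF (min (m+r+1) n - (m-r))
      = (n.factorial : ℝ) ^ ((2*(r:ℝ)+2-(n:ℝ))/(n:ℝ)) := by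
    rw [Finset.prod_congr rfl (fun m hm =>
      (by have := Finset.mem_Ico.mp hm; congr 1; omega :
        FF (min (m+r+1) n - (m-r)) = FF n)),
      Finset.prod_const, Nat.card_Ico, show r + 1 - (n-r-1) = 2*r+2-n by omega,
      FF_pow_eq _ _ (by omega)]
    congr 1
    rw [Nat.cast_sub (by omega)]
    push_cast
    ring
  have hC : ∏ m ∈ Finset.Ico (r+1) n, FF (min (m+r+1) n - (m-r))
      = ∏ i ∈ Finset.Icc (r+1) (n-1), FF i := by
    refine Finset.prod_bij' (fun m _ => n+r-m) (fun i _ => n+r-i)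
      (fun a ha => ?_) (fun a ha => ?_) (fun a ha => ?_) (fun a ha => ?_) (fun a ha => ?_)
    all_goals simp only [Finset.mem_Ico, Finset.mem_Icc] at ha
    all_goals first
      | (simp only [Finset.mem_Ico, Finset.mem_Icc]; omega)
      | omega
      | (congr 1; beta_reduce; omega)
  rw [hA, hB, hC, prod_FF_sq _ _ (by omega)]
  ring


/-- Known upper bounds on the ball size: if `0 < r ≤ (n-1)/2` then
`|B_{r,n}| ≤ ((2r+1)!)^((n-2r)/(2r+1)) · ∏_{i=r+1}^{2r} (i!)^(2/i)`, and if
`(n-1)/2 ≤ r ≤ n-1` then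
`|B_{r,n}| ≤ (n!)^((2r+2-n)/n) · ∏_{i=r+1}^{n-1} (i!)^(2/i)`,
where the exponents are real numbers and powers are real powers. -/
theorem ball_size_known_upper_bounds (n r : ℕ) (hn : 0 < n) (hr : r ≤ n - 1) :
    (0 < r → 2 * r + 1 ≤ n →
      ((Finset.univ.filter
          (fun g : Equiv.Perm (Fin n) =>
            ∀ i : Fin n, |((g i : ℕ) : ℤ) - ((i : ℕ) : ℤ)| ≤ (r : ℤ))).card : ℝ)
        ≤ ((Nat.factorial (2 * r + 1) : ℝ)
              ^ (((n : ℝ) - 2 * (r : ℝ)) / (2 * (r : ℝ) + 1)))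
            * ∏ i ∈ Finset.Icc (r + 1) (2 * r),
                (Nat.factorial i : ℝ) ^ ((2 : ℝ) / (i : ℝ))) ∧
    (n ≤ 2 * r + 1 →
      ((Finset.univ.filter
          (fun g : Equiv.Perm (Fin n) =>
            ∀ i : Fin n, |((g i : ℕ) : ℤ) - ((i : ℕ) : ℤ)| ≤ (r : ℤ))).card : ℝ)
        ≤ ((n.factorial : ℝ) ^ ((2 * (r : ℝ) + 2 - (n : ℝ)) / (n : ℝ)))
            * ∏ i ∈ Finset.Icc (r + 1) (n - 1),
                (Nat.factorial i : ℝ) ^ ((2 : ℝ) / (i : ℝ))) := by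
  have hcount : ((Finset.univ.filter
      (fun g : Equiv.Perm (Fin n) =>
        ∀ i : Fin n, |((g i : ℕ) : ℤ) - ((i : ℕ) : ℤ)| ≤ (r : ℤ))).card : ℝ)
      = ((permCount (fun i k : Fin n => |((k : ℕ) : ℤ) - ((i : ℕ) : ℤ)| ≤ (r : ℤ))) : ℝ) := by
    norm_cast
    rw [permCount]
    congr!
  have hprod : ∏ i : Fin n,
        FF (rowSum (fun i k : Fin n => |((k : ℕ) : ℤ) - ((i : ℕ) : ℤ)| ≤ (r : ℤ)) i)
      = ∏ m ∈ Finset.range n, FF (min (m+r+1) n - (m-r)) := by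
    rw [Finset.prod_congr rfl (fun i _ => by rw [band_rowSum n r i])]
    exact Fin.prod_univ_eq_prod_range (fun m => FF (min (m+r+1) n - (m-r))) n
  have hb := bregman_core n
    (fun i k : Fin n => |((k : ℕ) : ℤ) - ((i : ℕ) : ℤ)| ≤ (r : ℤ)) (Fintype.card_fin n)
  rw [hprod] at hb
  constructor
  · intro _ h2
    rw [hcount]
    exact hb.trans (le_of_eq (prod_band_case1 n r h2))
  · intro h2
    rw [hcount]
    exact hb.trans (le_of_eq (prod_band_case2 n r hn hr h2))
end
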